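/- Let B be a set, A a V-module with π·A = 0, and ρ : C₀(B,V) → A a V-linear map whose range is a finitely generated V-submodule of A. Then there exist a finite subset X ⊆ A and a V-linear map f : C₀(B,V) → V[X] such that e_X ∘ f = ρ. -/

import Mathlib

/-!
Statement 11.  `V` is a complete discrete valuation ring with uniformiser `π` (complete
meaning `π`-adically complete).  For a set `B`, `C₀(B,V)` is the `V`-module of functions
`h : B → V` such that for every `n` the set `{b | h b ∉ π^n V}` is finite.  For a finite
subset `X` of a `V`-module `A`, `V[X]` is the free module `X → V` and
`e_X : V[X] → A` sends the basis element at `x` to `x`.  The claim: if `π • A = 0` and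
`ρ : C₀(B,V)` is a `V`-linear map with finitely generated range, then there are a
finite `X ⊆ A` and a `V`-linear `f : C₀(B,V) → V[X]` with `e_X ∘ f = ρ`.
-/

/-- `C₀(B,V)`: functions `B → V` tending to zero `π`-adically. -/
def Czero (V : Type) [CommRing V] (π : V) (B : Type) : Submodule V (B → V) where
  carrier := {h | ∀ n : ℕ, {b : B | h b ∉ Ideal.span {π ^ n}}.Finite}
  zero_mem' := by
    intro n
    have : {b : B | (0 : B → V) b ∉ Ideal.span {π ^ n}} = ∅ := by
      ext b
      simp [Ideal.zero_mem]
    rw [this]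
    exact Set.finite_empty
  add_mem' := by
    intro h g hh hg n
    refine ((hh n).union (hg n)).subset ?_
    intro b hb
    by_contra hc
    simp only [Set.mem_union, Set.mem_setOf_eq, not_or, not_not] at hc
    exact hb (by simpa using Ideal.add_mem _ hc.1 hc.2)
  smul_mem' := by
    intro c h hh n
    refine (hh n).subset ?_
    intro b hb
    by_contra hc
    simp only [Set.mem_setOf_eq, not_not] at hc
    exact hb (by simpa [smul_eq_mul] using Ideal.mul_mem_left _ c hc)

namespace Stmt11

set_option linter.unusedSectionVars false

variable {V : Type} [CommRing V] [IsDomain V] {π : V} {B : Type}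

lemma smod_iff (n : ℕ) (a b : V) :
    a ≡ b [SMOD (Ideal.span {π} ^ n • ⊤ : Submodule V V)] ↔ a - b ∈ Ideal.span {π ^ n} := by
  rw [SModEq.sub_mem, smul_eq_mul, Ideal.mul_top, Ideal.span_singleton_pow]

lemma single_mem [DecidableEq B] (b : B) : (Pi.single b (1:V) : B → V) ∈ Czero V π B := by
  intro n
  apply Set.Finite.subset (Set.finite_singleton b)
  intro b' hb'
  simp only [Set.mem_setOf_eq] at hb'
  by_contra hne
  simp only [Set.mem_singleton_iff] at hne
  exact hb' (by rw [Pi.single_eq_of_ne hne]; exact Ideal.zero_mem _)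

lemma div_mem (hπ : π ≠ 0) {g : B → V} (hg : g ∈ Czero V π B)
    (h1 : ∀ b, g b ∈ Ideal.span {π}) :
    ∃ g' ∈ Czero V π B, g = π • g' := by
  choose c hc using fun b => Ideal.mem_span_singleton'.mp (h1 b)
  refine ⟨c, ?_, ?_⟩
  · intro n
    refine (hg (n + 1)).subset ?_
    intro b hb
    simp only [Set.mem_setOf_eq] at hb ⊢
    intro hgb
    apply hb
    obtain ⟨t, ht⟩ := Ideal.mem_span_singleton'.mp hgb
    have key : c b * π = t * π ^ n * π := by rw [hc b, ← ht]; ring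
    exact Ideal.mem_span_singleton'.mpr ⟨t, (mul_right_cancel₀ hπ key).symm⟩
  · funext b
    simp only [Pi.smul_apply, smul_eq_mul]
    rw [← hc b]; ring

end Stmt11

set_option linter.unusedSectionVars false in
set_option maxHeartbeats 1000000 in
theorem czero_lift_through_free
    (V : Type) [CommRing V] [IsDomain V] [IsDiscreteValuationRing V]
    (π : V) (hπ : Irreducible π) [IsAdicComplete (Ideal.span {π}) V]
    (B : Type) (A : Type) [AddCommGroup A] [Module V A] (hA : ∀ a : A, π • a = 0)
    (ρ : Czero V π B →ₗ[V] A) (hfg : (LinearMap.range ρ).FG) :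
    ∃ (X : Finset A) (f : Czero V π B →ₗ[V] (X → V)),
      (Fintype.linearCombination V (fun x : X => (x : A))).comp f = ρ := by
  classical
  obtain ⟨S, hS⟩ := hfg
  set e : (S → V) →ₗ[V] A := Fintype.linearCombination V (fun x : S => (x : A)) with he
  have hrange : LinearMap.range e = Submodule.span V (S : Set A) := by
    rw [he, Fintype.range_linearCombination]
    congr 1
    simp
  set δ : B → Czero V π B := fun b => ⟨Pi.single b 1, Stmt11.single_mem b⟩ with hδ
  have hu' : ∀ b : B, ∃ u : S → V, e u = ρ (δ b) := by
    intro b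
    have : ρ (δ b) ∈ LinearMap.range e := by
      rw [hrange, hS]; exact LinearMap.mem_range_self ρ (δ b)
    exact this
  choose u hu using hu'
  -- finite level sets
  set T : Czero V π B → ℕ → Finset B := fun h n => (h.2 n).toFinset with hT
  have memT : ∀ (h : Czero V π B) (n : ℕ) (b : B),
      b ∈ T h n ↔ (h : B → V) b ∉ Ideal.span {π ^ n} := fun h n b => Set.Finite.mem_toFinset _
  have notT : ∀ (h : Czero V π B) (n : ℕ) (b : B),
      b ∉ T h n → (h : B → V) b ∈ Ideal.span {π ^ n} := by
    intro h n b hb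
    by_contra hc
    exact hb ((memT h n b).mpr hc)
  have Tmono : ∀ (h : Czero V π B) {m n : ℕ}, m ≤ n → T h m ⊆ T h n := by
    intro h m n hmn b hb
    rw [memT] at hb ⊢
    intro hc
    exact hb (Ideal.span_singleton_le_span_singleton.mpr (pow_dvd_pow π hmn) hc)
  -- partial sums
  set s : Czero V π B → ℕ → (S → V) :=
    fun h n x => ∑ b ∈ T h n, (h : B → V) b * u b x with hs
  have hsup : ∀ (h : Czero V π B) (n : ℕ) (x : S) (U : Finset B), T h n ⊆ U →
      (∑ b ∈ U, (h : B → V) b * u b x) - s h n x ∈ Ideal.span {π ^ n} := by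
    intro h n x U hU
    rw [hs]
    rw [← Finset.sum_sdiff_eq_sub hU]
    exact Ideal.sum_mem _ fun b hb =>
      Ideal.mul_mem_right _ _ (notT h n b (Finset.mem_sdiff.mp hb).2)
  -- limits
  have compat : ∀ (h : Czero V π B) (x : S) {m n : ℕ}, m ≤ n →
      s h m x ≡ s h n x [SMOD (Ideal.span {π} ^ m • ⊤ : Submodule V V)] := by
    intro h x m n hmn
    rw [Stmt11.smod_iff]
    have := neg_mem (hsup h m x (T h n) (Tmono h hmn))
    simpa [neg_sub] using this
  have hlim : ∀ (h : Czero V π B) (x : S), ∃ L : V,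
      ∀ n, s h n x ≡ L [SMOD (Ideal.span {π} ^ n • ⊤ : Submodule V V)] := by
    intro h x
    exact IsPrecomplete.prec (IsAdicComplete.toIsPrecomplete) (fun {m n} hmn => compat h x hmn)
  choose F hF using hlim
  have hFm : ∀ (h : Czero V π B) (x : S) (n : ℕ), s h n x - F h x ∈ Ideal.span {π ^ n} :=
    fun h x n => (Stmt11.smod_iff n _ _).mp (hF h x n)
  have haus : ∀ a : V, (∀ n : ℕ, a ∈ Ideal.span {π ^ n}) → a = 0 := by
    intro a ha
    refine IsHausdorff.haus (IsAdicComplete.toIsHausdorff (I := Ideal.span {π}) (M := V)) a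
      (fun n => ?_)
    rw [Stmt11.smod_iff]
    simpa using ha n
  have sU : ∀ (h : Czero V π B) (x : S) (n : ℕ) (U : Finset B), T h n ⊆ U →
      F h x - ∑ b ∈ U, (h : B → V) b * u b x ∈ Ideal.span {π ^ n} := by
    intro h x n U hU
    have := neg_mem (add_mem (hFm h x n) (hsup h n x U hU))
    convert this using 1
    ring
  -- additivity
  have Fadd : ∀ h g : Czero V π B, F (h + g) = fun x => F h x + F g x := by
    intro h g
    funext x
    have key : ∀ n : ℕ, F (h + g) x - (F h x + F g x) ∈ Ideal.span {π ^ n} := by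
      intro n
      set U : Finset B := T h n ∪ T g n ∪ T (h + g) n with hU
      have a1 := sU (h + g) x n U (by intro b hb; simp [hU, hb])
      have a2 := sU h x n U (by intro b hb; simp [hU, hb])
      have a3 := sU g x n U (by intro b hb; simp [hU, hb])
      have sum_eq : (∑ b ∈ U, ((h + g : Czero V π B) : B → V) b * u b x)
          = (∑ b ∈ U, (h : B → V) b * u b x) + ∑ b ∈ U, (g : B → V) b * u b x := by
        rw [← Finset.sum_add_distrib]
        refine Finset.sum_congr rfl fun b _ => ?_
        have : ((h + g : Czero V π B) : B → V) b = (h : B → V) b + (g : B → V) b := rfl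
        rw [this]; ring
      have eq2 : F (h + g) x - (F h x + F g x)
          = (F (h + g) x - ∑ b ∈ U, ((h + g : Czero V π B) : B → V) b * u b x)
            - (F h x - ∑ b ∈ U, (h : B → V) b * u b x)
            - (F g x - ∑ b ∈ U, (g : B → V) b * u b x) := by
        rw [sum_eq]; ring
      rw [eq2]
      exact sub_mem (sub_mem a1 a2) a3
    exact sub_eq_zero.mp (haus _ key)
  have Fsmul : ∀ (c : V) (h : Czero V π B), F (c • h) = fun x => c * F h x := by
    intro c h
    funext x
    have key : ∀ n : ℕ, F (c • h) x - c * F h x ∈ Ideal.span {π ^ n} := by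
      intro n
      set U : Finset B := T h n ∪ T (c • h) n with hU
      have a1 := sU (c • h) x n U (by intro b hb; simp [hU, hb])
      have a2 := sU h x n U (by intro b hb; simp [hU, hb])
      have sum_eq : (∑ b ∈ U, ((c • h : Czero V π B) : B → V) b * u b x)
          = c * ∑ b ∈ U, (h : B → V) b * u b x := by
        rw [Finset.mul_sum]
        refine Finset.sum_congr rfl fun b _ => ?_
        have : ((c • h : Czero V π B) : B → V) b = c * (h : B → V) b := rfl
        rw [this]; ring
      have eq2 : F (c • h) x - c * F h x
          = (F (c • h) x - ∑ b ∈ U, ((c • h : Czero V π B) : B → V) b * u b x)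
            - c * (F h x - ∑ b ∈ U, (h : B → V) b * u b x) := by
        rw [sum_eq]; ring
      rw [eq2]
      exact sub_mem a1 (Ideal.mul_mem_left _ c a2)
    exact sub_eq_zero.mp (haus _ key)
  refine ⟨S, ⟨⟨fun h => F h, fun h g => Fadd h g⟩, fun c h => Fsmul c h⟩, ?_⟩
  apply LinearMap.ext
  intro h
  show e (F h) = ρ h
  -- σ : finite truncation of h at level 1
  set σ : Czero V π B := ∑ b ∈ T h 1, (h : B → V) b • δ b with hσ
  have hσval : ∀ b : B, (σ : B → V) b = if b ∈ T h 1 then (h : B → V) b else 0 := by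
    intro b
    have hcoe : (σ : B → V) = ∑ b' ∈ T h 1, (h : B → V) b' • (Pi.single b' 1 : B → V) := by
      rw [hσ]
      push_cast
      rfl
    rw [hcoe, Finset.sum_apply]
    simp only [Pi.smul_apply, Pi.single_apply, smul_eq_mul, mul_ite, mul_one, mul_zero]
    simp [Finset.sum_ite_eq]
  have hdiff : ∀ b : B, ((h - σ : Czero V π B) : B → V) b ∈ Ideal.span {π} := by
    intro b
    have hval : ((h - σ : Czero V π B) : B → V) b = (h : B → V) b - (σ : B → V) b := rfl
    rw [hval, hσval b]
    by_cases hb : b ∈ T h 1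
    · simp [hb]
    · simp only [if_neg hb, sub_zero]
      have := notT h 1 b hb
      rwa [pow_one] at this
  obtain ⟨g', hg', hgg⟩ := Stmt11.div_mem hπ.ne_zero (h - σ : Czero V π B).2 hdiff
  have hρσ : ρ h = ρ σ := by
    have hzero : ρ (h - σ) = 0 := by
      have heq : (h - σ : Czero V π B) = π • (⟨g', hg'⟩ : Czero V π B) :=
        Subtype.ext (by simpa using hgg)
      rw [heq, LinearMap.map_smul]
      exact hA _
    have := ρ.map_sub h σ
    rw [hzero] at this
    exact sub_eq_zero.mp this.symm
  have hFs : e (F h) = e (s h 1) := by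
    rw [he, Fintype.linearCombination_apply, Fintype.linearCombination_apply]
    refine Finset.sum_congr rfl fun x _ => ?_
    have hm : F h x - s h 1 x ∈ Ideal.span {π} := by
      have := neg_mem (hFm h x 1)
      rw [pow_one] at this
      simpa [neg_sub] using this
    obtain ⟨c, hc⟩ := Ideal.mem_span_singleton'.mp hm
    have hF' : F h x = c * π + s h 1 x := sub_eq_iff_eq_add.mp hc.symm
    rw [hF', add_smul, mul_smul, hA, smul_zero, zero_add]
  have hes : e (s h 1) = ρ σ := by
    have hsum : s h 1 = ∑ b ∈ T h 1, (h : B → V) b • u b := by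
      funext x
      rw [hs, Finset.sum_apply]
      rfl
    rw [hsum, map_sum, hσ, map_sum]
    refine Finset.sum_congr rfl fun b _ => ?_
    rw [LinearMap.map_smul, LinearMap.map_smul, hu b]
  rw [hFs, hes, hρσ]
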